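/- arXiv:2303.01379 — 4 statements merged into one kernel-verified Lean document; each statement's English description precedes it below -/
import Mathlib

section
/- For the Euler-angle Jacobian matrix J_{Oη}(φ,θ) = [[1, sin(φ)tan(θ), cos(φ)tan(θ)],[0, cos(φ), -sin(φ)],[0, sin(φ)/cos(θ), cos(φ)/cos(θ)]], the operator norm of its inverse satisfies ‖J_{Oη}(φ,θ)^{-1}‖ = sqrt(1 + |sin(θ)|) ≤ sqrt(2) for all φ ∈ ℝ and θ with cos(θ) ≠ 0. -/
/-- The Euler-angle Jacobian mapping angular velocity to Euler-angle rates. -/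
noncomputable def JOeta (φ θ : ℝ) : Matrix (Fin 3) (Fin 3) ℝ :=
  !![1, Real.sin φ * Real.tan θ, Real.cos φ * Real.tan θ;
     0, Real.cos φ, -Real.sin φ;
     0, Real.sin φ / Real.cos θ, Real.cos φ / Real.cos θ]

/-- The operator (largest singular value) norm of a 3×3 real matrix. -/
noncomputable def opNorm3 (A : Matrix (Fin 3) (Fin 3) ℝ) : ℝ :=
  ‖Matrix.toEuclideanCLM (𝕜 := ℝ) A‖

/-- The inverse of the Euler-angle Jacobian. -/
noncomputable def Binv (φ θ : ℝ) : Matrix (Fin 3) (Fin 3) ℝ :=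
  !![1, 0, -Real.sin θ;
     0, Real.cos φ, Real.sin φ * Real.cos θ;
     0, -Real.sin φ, Real.cos φ * Real.cos θ]

lemma JOeta_inv_eq (φ θ : ℝ) (hθ : Real.cos θ ≠ 0) : (JOeta φ θ)⁻¹ = Binv φ θ := by
  apply Matrix.inv_eq_right_inv
  have hs := Real.sin_sq_add_cos_sq φ
  ext i j
  fin_cases i <;> fin_cases j <;>
    simp [JOeta, Binv, Matrix.mul_apply, Fin.sum_univ_three, Real.tan_eq_sin_div_cos,
      Matrix.vecHead, Matrix.vecTail] <;>
    first
      | rfl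
      | linear_combination (Real.sin θ * Real.cos θ) * hs
      | linear_combination Real.cos θ * hs
      | (field_simp; linear_combination Real.cos θ * hs)
      | (field_simp; linear_combination (Real.sin θ * Real.cos θ) * hs)
      | linear_combination hs
      | linear_combination (Real.sin θ * Real.cos θ * (Real.cos θ)⁻¹) * hs + Real.sin θ * (mul_inv_cancel₀ hθ)
      | linear_combination (Real.cos θ * (Real.cos θ)⁻¹) * hs + (mul_inv_cancel₀ hθ)
      | ring

lemma euclid_normsq (x : EuclideanSpace ℝ (Fin 3)) :
    ‖x‖^2 = x 0^2 + x 1^2 + x 2^2 := by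
  rw [EuclideanSpace.norm_eq, Real.sq_sqrt (by positivity)]
  simp [Fin.sum_univ_three, sq_abs]

lemma normsq_Binv (φ θ : ℝ) (x : EuclideanSpace ℝ (Fin 3)) :
    ‖Matrix.toEuclideanCLM (𝕜 := ℝ) (Binv φ θ) x‖^2 =
      x 0^2 + x 1^2 + x 2^2 - 2 * Real.sin θ * x 0 * x 2 := by
  rw [euclid_normsq]
  have e : ∀ i, (Matrix.toEuclideanCLM (𝕜 := ℝ) (Binv φ θ) x) i
      = ((Binv φ θ).mulVec (fun j => x j)) i := fun _ => rfl
  have hφ := Real.sin_sq_add_cos_sq φ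
  have hθ2 := Real.sin_sq_add_cos_sq θ
  simp only [e]
  simp [Binv, Matrix.mulVec, dotProduct, Fin.sum_univ_three, Matrix.vecHead,
    Matrix.vecTail]
  linear_combination x 1^2 * hφ + x 2^2 * Real.cos θ^2 * hφ + x 2^2 * hθ2

lemma norm_Binv (φ θ : ℝ) :
    opNorm3 (Binv φ θ) = Real.sqrt (1 + |Real.sin θ|) := by
  set s := Real.sin θ with hsdef
  have h1s : (0:ℝ) ≤ 1 + |s| := by positivity
  set T := Matrix.toEuclideanCLM (𝕜 := ℝ) (Binv φ θ) with hT
  apply le_antisymm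
  · apply ContinuousLinearMap.opNorm_le_bound _ (Real.sqrt_nonneg _)
    intro x
    have h2 : ‖T x‖^2 ≤ (1+|s|) * ‖x‖^2 := by
      rw [normsq_Binv, euclid_normsq]
      nlinarith [mul_nonneg (by linarith [neg_abs_le s] : (0:ℝ) ≤ |s| + s) (sq_nonneg (x 0 + x 2)),
                 mul_nonneg (by linarith [le_abs_self s] : (0:ℝ) ≤ |s| - s) (sq_nonneg (x 0 - x 2)),
                 mul_nonneg (abs_nonneg s) (sq_nonneg (x 1))]
    calc ‖T x‖ = Real.sqrt (‖T x‖^2) := (Real.sqrt_sq (norm_nonneg _)).symm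
      _ ≤ Real.sqrt ((1+|s|)*‖x‖^2) := Real.sqrt_le_sqrt h2
      _ = Real.sqrt (1+|s|) * ‖x‖ := by
          rw [Real.sqrt_mul h1s, Real.sqrt_sq (norm_nonneg _)]
  · set ε : ℝ := if 0 ≤ s then -1 else 1 with hεdef
    have hε2 : ε^2 = 1 := by by_cases h : 0 ≤ s <;> simp [hεdef, h]
    have hεs : -(s*ε) = |s| := by
      by_cases h : 0 ≤ s
      · simp only [hεdef, if_pos h, abs_of_nonneg h]; ring
      · simp only [hεdef, if_neg h, abs_of_neg (lt_of_not_ge h)]; ring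
    set v : EuclideanSpace ℝ (Fin 3) := (WithLp.equiv 2 (Fin 3 → ℝ)).symm ![1,0,ε] with hvdef
    have hv0 : v 0 = 1 := rfl
    have hv1 : v 1 = 0 := rfl
    have hv2 : v 2 = ε := rfl
    have hvnorm : ‖v‖^2 = 2 := by
      rw [euclid_normsq, hv0, hv1, hv2]; rw [hε2]; ring
    have hTv : ‖T v‖^2 = (1+|s|)*2 := by
      rw [normsq_Binv, hv0, hv1, hv2]
      nlinarith [hε2, hεs]
    have hle := T.le_opNorm v
    have hv : ‖v‖ = Real.sqrt 2 := by
      rw [← Real.sqrt_sq (norm_nonneg v), hvnorm]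
    have hTv' : ‖T v‖ = Real.sqrt (1+|s|) * Real.sqrt 2 := by
      rw [← Real.sqrt_sq (norm_nonneg (T v)), hTv, Real.sqrt_mul h1s]
    rw [hv, hTv'] at hle
    have h2pos : (0:ℝ) < Real.sqrt 2 := by positivity
    exact le_of_mul_le_mul_right hle h2pos

theorem stmt0 (φ θ : ℝ) (hθ : Real.cos θ ≠ 0) :
    opNorm3 (JOeta φ θ)⁻¹ = Real.sqrt (1 + |Real.sin θ|) ∧
      Real.sqrt (1 + |Real.sin θ|) ≤ Real.sqrt 2 := by
  refine ⟨?_, ?_⟩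
  · rw [JOeta_inv_eq φ θ hθ, norm_Binv]
  · apply Real.sqrt_le_sqrt
    have := abs_le.mpr ⟨Real.neg_one_le_sin θ, Real.sin_le_one θ⟩
    linarith
end

section
/- For the Euler-angle Jacobian matrix J_{Oη}(φ,θ) defined by [[1, sin(φ)tan(θ), cos(φ)tan(θ)],[0, cos(φ), -sin(φ)],[0, sin(φ)/cos(θ), cos(φ)/cos(θ)]], its operator norm satisfies ‖J_{Oη}(φ,θ)‖ = sqrt((|sin(θ)|+1)/(1 - sin²(θ))) for all θ with cos(θ) ≠ 0. -/
private lemma clm_norm_sq (A : Matrix (Fin 3) (Fin 3) ℝ) (w : Fin 3 → ℝ) :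
    ‖Matrix.toEuclideanCLM (𝕜 := ℝ) A ((WithLp.equiv 2 (Fin 3 → ℝ)).symm w)‖^2
      = ∑ i : Fin 3, (A.mulVec w i)^2 := by
  rw [WithLp.equiv_symm_apply, Matrix.toEuclideanCLM_toLp, EuclideanSpace.norm_eq,
    Real.sq_sqrt (by positivity)]
  simp [Matrix.toLin'_apply, sq_abs]

private lemma vec_norm_sq (w : Fin 3 → ℝ) :
    ‖(WithLp.equiv 2 (Fin 3 → ℝ)).symm w‖^2 = ∑ i : Fin 3, (w i)^2 := by
  rw [EuclideanSpace.norm_eq, Real.sq_sqrt (by positivity)]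
  simp [sq_abs]

private lemma key_ineq (s c u v y0 : ℝ) (h : s^2 + c^2 = 1) :
    (c*y0 + s*v)^2 + c^2*u^2 + v^2 ≤ (1+|s|)*(y0^2+u^2+v^2) := by
  rcases abs_cases s with ⟨ha, hs⟩ | ⟨ha, hs⟩ <;> rw [ha]
  · have h1 : 0 < 1 + s := by linarith
    have h2 : (1+s)*((1+s)*(y0^2+u^2+v^2) - ((c*y0+s*v)^2 + c^2*u^2 + v^2))
        = s*((1+s)*y0 - c*v)^2 + s*((1+s)*u)^2 := by
      linear_combination (-(1+s)*y0^2 - (1+s)*u^2 - s*v^2) * h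
    have h3 : 0 ≤ s*((1+s)*y0 - c*v)^2 + s*((1+s)*u)^2 :=
      add_nonneg (mul_nonneg hs (sq_nonneg _)) (mul_nonneg hs (sq_nonneg _))
    nlinarith [h2, h3, h1]
  · have h1 : 0 < 1 - s := by linarith
    have h2 : (1-s)*((1+ -s)*(y0^2+u^2+v^2) - ((c*y0+s*v)^2 + c^2*u^2 + v^2))
        = (-s)*((1-s)*y0 + c*v)^2 + (-s)*((1-s)*u)^2 := by
      linear_combination (-(1-s)*y0^2 - (1-s)*u^2 + s*v^2) * h
    have h3 : 0 ≤ (-s)*((1-s)*y0 + c*v)^2 + (-s)*((1-s)*u)^2 :=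
      add_nonneg (mul_nonneg (by linarith) (sq_nonneg _))
        (mul_nonneg (by linarith) (sq_nonneg _))
    nlinarith [h2, h3, h1]

private lemma eq_of_sq_eq {a b : ℝ} (ha : 0 ≤ a) (hb : 0 ≤ b) (h : a^2 = b^2) : a = b := by
  nlinarith

set_option maxHeartbeats 2000000 in
theorem stmt1 (φ θ : ℝ) (hθ : Real.cos θ ≠ 0) :
    opNorm3 (JOeta φ θ) =
      Real.sqrt ((|Real.sin θ| + 1) / (1 - Real.sin θ ^ 2)) := by
  have hpyth : Real.sin θ ^ 2 + Real.cos θ ^ 2 = 1 := Real.sin_sq_add_cos_sq θ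
  have hpythφ : Real.sin φ ^ 2 + Real.cos φ ^ 2 = 1 := Real.sin_sq_add_cos_sq φ
  have htan : Real.tan θ = Real.sin θ / Real.cos θ := Real.tan_eq_sin_div_cos θ
  set s := Real.sin θ with hs
  set c := Real.cos θ with hc
  set sp := Real.sin φ with hsp
  set cp := Real.cos φ with hcp
  have hc2 : (0:ℝ) < c^2 := by positivity
  have h1s : 1 - s^2 = c^2 := by linarith
  rw [h1s]
  set r := Real.sqrt ((|s|+1)/c^2) with hr
  have hr0 : 0 ≤ r := Real.sqrt_nonneg _
  have habs : 0 ≤ |s| := abs_nonneg s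
  have hr2 : r^2 = (|s|+1)/c^2 := Real.sq_sqrt (by positivity)
  show ‖Matrix.toEuclideanCLM (𝕜 := ℝ) (JOeta φ θ)‖ = r
  set B := Matrix.toEuclideanCLM (𝕜 := ℝ) (JOeta φ θ) with hB
  -- mulVec computation
  have hmv : ∀ w : Fin 3 → ℝ, ∑ i : Fin 3, ((JOeta φ θ).mulVec w i)^2 =
      (w 0 + sp*(s/c)*(w 1) + cp*(s/c)*(w 2))^2 + (cp*(w 1) - sp*(w 2))^2
        + (sp/c*(w 1) + cp/c*(w 2))^2 := by
    intro w
    simp [JOeta, Matrix.mulVec, dotProduct, Fin.sum_univ_three, htan,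
      Matrix.vecHead, Matrix.vecTail]
    ring
  apply le_antisymm
  · apply ContinuousLinearMap.opNorm_le_bound _ hr0
    intro x
    obtain ⟨w, rfl⟩ := (WithLp.equiv 2 (Fin 3 → ℝ)).symm.surjective x
    have h2 : ‖B ((WithLp.equiv 2 (Fin 3 → ℝ)).symm w)‖^2
        ≤ (r * ‖(WithLp.equiv 2 (Fin 3 → ℝ)).symm w‖)^2 := by
      rw [mul_pow, clm_norm_sq, vec_norm_sq, hr2, hmv w, Fin.sum_univ_three]
      set u := cp*(w 1) - sp*(w 2) with hu
      set v := sp*(w 1) + cp*(w 2) with hv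
      have huv : u^2 + v^2 = (w 1)^2 + (w 2)^2 := by
        rw [hu, hv]; linear_combination ((w 1)^2 + (w 2)^2) * hpythφ
      have hkey := key_ineq s c u v (w 0) hpyth
      have hL : (w 0 + sp*(s/c)*(w 1) + cp*(s/c)*(w 2))^2 + u^2
          + (sp/c*(w 1) + cp/c*(w 2))^2
          = ((c*(w 0) + s*v)^2 + c^2*u^2 + v^2)/c^2 := by
        rw [hu, hv]; field_simp; ring
      have hw' : (w 0)^2 + u^2 + v^2 = (w 0)^2 + (w 1)^2 + (w 2)^2 := by
        rw [hu, hv]; linear_combination ((w 1)^2 + (w 2)^2) * hpythφ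
      calc (w 0 + sp*(s/c)*(w 1) + cp*(s/c)*(w 2))^2 + u^2
            + (sp/c*(w 1) + cp/c*(w 2))^2
          = ((c*(w 0) + s*v)^2 + c^2*u^2 + v^2)/c^2 := hL
        _ ≤ ((1+|s|)*((w 0)^2 + u^2 + v^2))/c^2 := by
            exact div_le_div_of_nonneg_right hkey hc2.le
        _ = (|s|+1)/c^2 * ((w 0)^2 + (w 1)^2 + (w 2)^2) := by
            rw [hw']; ring
    calc ‖B ((WithLp.equiv 2 (Fin 3 → ℝ)).symm w)‖
        = Real.sqrt (‖B ((WithLp.equiv 2 (Fin 3 → ℝ)).symm w)‖^2) :=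
          (Real.sqrt_sq (norm_nonneg _)).symm
      _ ≤ Real.sqrt ((r * ‖(WithLp.equiv 2 (Fin 3 → ℝ)).symm w‖)^2) := Real.sqrt_le_sqrt h2
      _ = r * ‖(WithLp.equiv 2 (Fin 3 → ℝ)).symm w‖ := Real.sqrt_sq (by positivity)
  · -- lower bound : exhibit a norm-attaining vector
    have main : ∀ y0 y1 y2 : ℝ,
        ((y0 + sp*(s/c)*y1 + cp*(s/c)*y2)^2 + (cp*y1 - sp*y2)^2
          + (sp/c*y1 + cp/c*y2)^2 = r^2 * (y0^2+y1^2+y2^2)) →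
        (0 < y0^2+y1^2+y2^2) → r ≤ ‖B‖ := by
      intro y0 y1 y2 heq hpos
      have hw0 : (![y0, y1, y2] : Fin 3 → ℝ) 0 = y0 := rfl
      have hw1 : (![y0, y1, y2] : Fin 3 → ℝ) 1 = y1 := rfl
      have hw2 : (![y0, y1, y2] : Fin 3 → ℝ) 2 = y2 := rfl
      have h1 : ‖B ((WithLp.equiv 2 (Fin 3 → ℝ)).symm ![y0, y1, y2])‖^2
          = (r * ‖(WithLp.equiv 2 (Fin 3 → ℝ)).symm ![y0, y1, y2]‖)^2 := by
        rw [hB, mul_pow, clm_norm_sq, vec_norm_sq, hmv, Fin.sum_univ_three,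
          hw0, hw1, hw2, heq]
      have hxpos : 0 < ‖(WithLp.equiv 2 (Fin 3 → ℝ)).symm ![y0, y1, y2]‖ := by
        have h4 : 0 < ‖(WithLp.equiv 2 (Fin 3 → ℝ)).symm ![y0, y1, y2]‖^2 := by
          rw [vec_norm_sq, Fin.sum_univ_three, hw0, hw1, hw2]; exact hpos
        nlinarith [norm_nonneg ((WithLp.equiv 2 (Fin 3 → ℝ)).symm ![y0, y1, y2])]
      have h2 := eq_of_sq_eq (norm_nonneg _) (by positivity) h1
      have h3 := B.le_opNorm ((WithLp.equiv 2 (Fin 3 → ℝ)).symm ![y0, y1, y2])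
      rw [h2] at h3
      exact le_of_mul_le_mul_right h3 hxpos
    rcases lt_trichotomy s 0 with hslt | hseq | hsgt
    · have habs' : |s| = -s := abs_of_neg hslt
      apply main (-c) (sp*(1-s)) (cp*(1-s))
      · rw [hr2, habs']
        have hA : -c + sp*(s/c)*(sp*(1-s)) + cp*(s/c)*(cp*(1-s)) = -((1-s)/c) := by
          field_simp
          linear_combination (s*(1-s)) * hpythφ - hpyth
        have hBu : cp*(sp*(1-s)) - sp*(cp*(1-s)) = 0 := by ring
        have hC : sp/c*(sp*(1-s)) + cp/c*(cp*(1-s)) = (1-s)/c := by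
          field_simp
          linear_combination (1-s) * hpythφ
        have hS : (-c)^2 + (sp*(1-s))^2 + (cp*(1-s))^2 = 2*(1-s) := by
          linear_combination (1-s)^2 * hpythφ + hpyth
        rw [hA, hBu, hC, hS]
        field_simp
        ring
      · nlinarith [hpythφ, hc2, hslt]
    · apply main 0 sp cp
      · rw [hr2, hseq]
        have hA : (0:ℝ) + sp*((0:ℝ)/c)*sp + cp*((0:ℝ)/c)*cp = 0 := by
          field_simp
          ring
        have hBu : cp*sp - sp*cp = 0 := by ring
        have hC : sp/c*sp + cp/c*cp = 1/c := by
          field_simp; linear_combination hpythφ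
        have hS : (0:ℝ)^2 + sp^2 + cp^2 = 1 := by linarith
        rw [hA, hBu, hC, hS]
        simp
      · nlinarith [hpythφ]
    · have habs' : |s| = s := abs_of_pos hsgt
      apply main c (sp*(1+s)) (cp*(1+s))
      · rw [hr2, habs']
        have hA : c + sp*(s/c)*(sp*(1+s)) + cp*(s/c)*(cp*(1+s)) = (1+s)/c := by
          field_simp
          linear_combination (s*(1+s)) * hpythφ + hpyth
        have hBu : cp*(sp*(1+s)) - sp*(cp*(1+s)) = 0 := by ring
        have hC : sp/c*(sp*(1+s)) + cp/c*(cp*(1+s)) = (1+s)/c := by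
          field_simp
          linear_combination hpythφ
        have hS : c^2 + (sp*(1+s))^2 + (cp*(1+s))^2 = 2*(1+s) := by
          linear_combination (1+s)^2 * hpythφ + hpyth
        rw [hA, hBu, hC, hS]
        field_simp
        ring
      · nlinarith [hpythφ, hc2, hsgt]
end

section
/- Suppose Ṁ_O - 2C_O and Ṁ - 2C are skew-symmetric matrices (of sizes 6×6 and 6N×6N respectively), G ∈ ℝ^{6×6N} is a differentiable matrix function of time, and define M̃ = M_O + G M Gᵀ, C̃ = C_O + G C Gᵀ + G M Ġᵀ, where M is symmetric. Then the matrix d/dt(M̃) - 2C̃ is skew-symmetric, i.e., equals the negative of its transpose. -/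
open Matrix

theorem stmt4 (N : ℕ)
    (MO MO' CO : ℝ → Matrix (Fin 6) (Fin 6) ℝ)
    (M M' C : ℝ → Matrix (Fin (6 * N)) (Fin (6 * N)) ℝ)
    (G G' : ℝ → Matrix (Fin 6) (Fin (6 * N)) ℝ)
    (D : ℝ → Matrix (Fin 6) (Fin 6) ℝ)
    -- entrywise derivatives of M_O, M and G
    (hMO : ∀ t i j, HasDerivAt (fun s => MO s i j) (MO' t i j) t)
    (hM : ∀ t i j, HasDerivAt (fun s => M s i j) (M' t i j) t)
    (hG : ∀ t i j, HasDerivAt (fun s => G s i j) (G' t i j) t)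
    -- skew-symmetry of Ṁ_O - 2C_O and Ṁ - 2C
    (hskewO : ∀ t, (MO' t - 2 • CO t)ᵀ = -(MO' t - 2 • CO t))
    (hskew : ∀ t, (M' t - 2 • C t)ᵀ = -(M' t - 2 • C t))
    -- M symmetric
    (hMsym : ∀ t, (M t).IsSymm)
    -- D is the entrywise derivative of M̃ = M_O + G M Gᵀ
    (hD : ∀ t i j, HasDerivAt (fun s => (MO s + G s * M s * (G s)ᵀ) i j) (D t i j) t) :
    -- d/dt(M̃) - 2C̃ is skew-symmetric, with C̃ = C_O + G C Gᵀ + G M Ġᵀ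
    ∀ t, (D t - 2 • (CO t + G t * C t * (G t)ᵀ + G t * M t * (G' t)ᵀ))ᵀ
        = -(D t - 2 • (CO t + G t * C t * (G t)ᵀ + G t * M t * (G' t)ᵀ)) := by
  intro t
  -- First identify D t.
  have hD2 : ∀ i j, HasDerivAt (fun s => (MO s + G s * M s * (G s)ᵀ) i j)
      ((MO' t + (G' t * M t * (G t)ᵀ + G t * M' t * (G t)ᵀ + G t * M t * (G' t)ᵀ)) i j) t := by
    intro i j
    have key : HasDerivAt (fun s => ∑ l, (∑ k, G s i k * M s k l) * G s j l)
        (∑ l, ((∑ k, (G' t i k * M t k l + G t i k * M' t k l)) * G t j l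
          + (∑ k, G t i k * M t k l) * G' t j l)) t := by
      apply HasDerivAt.fun_sum
      intro l _
      exact (HasDerivAt.fun_sum (fun k _ => ((hG t i k).mul (hM t k l)))).mul (hG t j l)
    have key2 : HasDerivAt (fun s => (MO s + G s * M s * (G s)ᵀ) i j)
        (MO' t i j + ∑ l, ((∑ k, (G' t i k * M t k l + G t i k * M' t k l)) * G t j l
          + (∑ k, G t i k * M t k l) * G' t j l)) t := by
      have := (hMO t i j).add key
      have heq : (fun s => (MO s + G s * M s * (G s)ᵀ) i j)
          = fun s => MO s i j + ∑ l, (∑ k, G s i k * M s k l) * G s j l := by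
        funext s
        simp [Matrix.add_apply, Matrix.mul_apply, Matrix.transpose_apply]
      rw [heq]
      exact this
    convert key2 using 1
    simp only [Matrix.add_apply, Matrix.mul_apply, Matrix.transpose_apply,
      Finset.sum_add_distrib, Finset.sum_mul, add_mul]
  have hDeq : D t = MO' t + (G' t * M t * (G t)ᵀ + G t * M' t * (G t)ᵀ + G t * M t * (G' t)ᵀ) := by
    ext i j
    exact (hD t i j).unique (hD2 i j)
  rw [hDeq]
  have hMs : (M t)ᵀ = M t := hMsym t
  have e1 := hskewO t
  have e2 := hskew t
  have key : (MO' t + (G' t * M t * (G t)ᵀ + G t * M' t * (G t)ᵀ + G t * M t * (G' t)ᵀ))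
      - 2 • (CO t + G t * C t * (G t)ᵀ + G t * M t * (G' t)ᵀ)
      = (MO' t - 2 • CO t) + G t * (M' t - 2 • C t) * (G t)ᵀ
        + (G' t * M t * (G t)ᵀ - G t * M t * (G' t)ᵀ) := by
    simp only [smul_add, Matrix.mul_sub, Matrix.sub_mul, Matrix.mul_smul, Matrix.smul_mul]
    abel
  rw [key]
  simp only [Matrix.transpose_add, Matrix.transpose_sub, Matrix.transpose_mul,
    Matrix.transpose_transpose, hMs, e1, e2]
  simp only [Matrix.mul_neg, Matrix.neg_mul, neg_add_rev, Matrix.mul_assoc]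
  abel
end

section
/- Let μ > 0 and let δ be a constant satisfying 0 < δ < (sqrt(μ²+1) - 1)/(sqrt(μ²+1) + 1). Let W ∈ ℝ^{3×3} with ‖W‖ ≤ δ (operator norm). Then for every nonzero y ∈ ℝ³, the angle θ_W between y and (I₃ - W)y satisfies cos(θ_W) ≥ (1-δ)/(1+δ) > 1/sqrt(μ²+1), and in particular |θ_W| < arctan(μ). -/
open Matrix

theorem stmt12 (μ δ : ℝ) (hμ : 0 < μ) (hδ0 : 0 < δ)
    (hδ : δ < (Real.sqrt (μ ^ 2 + 1) - 1) / (Real.sqrt (μ ^ 2 + 1) + 1))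
    (W : Matrix (Fin 3) (Fin 3) ℝ) (hW : opNorm3 W ≤ δ)
    (y : EuclideanSpace ℝ (Fin 3)) (hy : y ≠ 0) :
    (1 - δ) / (1 + δ) ≤
        (inner ℝ y (Matrix.toEuclideanCLM (𝕜 := ℝ) (1 - W) y) : ℝ) /
          (‖y‖ * ‖Matrix.toEuclideanCLM (𝕜 := ℝ) (1 - W) y‖) ∧
      1 / Real.sqrt (μ ^ 2 + 1) < (1 - δ) / (1 + δ) ∧
      InnerProductGeometry.angle y (Matrix.toEuclideanCLM (𝕜 := ℝ) (1 - W) y) <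
        Real.arctan μ := by
  have hs0 : (0:ℝ) ≤ μ ^ 2 + 1 := by positivity
  set s := Real.sqrt (μ ^ 2 + 1) with hs_def
  have hssq : s ^ 2 = μ ^ 2 + 1 := Real.sq_sqrt hs0
  have hs1 : 1 < s := by
    nlinarith [Real.sqrt_nonneg (μ ^ 2 + 1)]
  have hδ1 : δ < 1 := lt_of_lt_of_le hδ (by
    rw [div_le_one (by linarith)]; linarith)
  rw [lt_div_iff₀ (by linarith : (0:ℝ) < s + 1)] at hδ
  have h2 : 1 / s < (1 - δ) / (1 + δ) := by
    rw [div_lt_div_iff₀ (by linarith) (by linarith)]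
    nlinarith
  set Wc := Matrix.toEuclideanCLM (𝕜 := ℝ) W with hWc
  have hTeq : Matrix.toEuclideanCLM (𝕜 := ℝ) (1 - W) y = y - Wc y := by
    rw [map_sub, _root_.map_one]; rfl
  rw [hTeq]
  have hyn : 0 < ‖y‖ := norm_pos_iff.mpr hy
  have hWy : ‖Wc y‖ ≤ δ * ‖y‖ :=
    le_trans (Wc.le_opNorm y) (mul_le_mul_of_nonneg_right hW (norm_nonneg y))
  have hinner : (1 - δ) * ‖y‖ ^ 2 ≤ (inner ℝ y (y - Wc y) : ℝ) := by
    rw [inner_sub_right, real_inner_self_eq_norm_sq]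
    have h3 : (inner ℝ y (Wc y) : ℝ) ≤ δ * ‖y‖ ^ 2 := by
      calc (inner ℝ y (Wc y) : ℝ) ≤ ‖y‖ * ‖Wc y‖ := real_inner_le_norm _ _
        _ ≤ ‖y‖ * (δ * ‖y‖) := by
            exact mul_le_mul_of_nonneg_left hWy (norm_nonneg y)
        _ = δ * ‖y‖ ^ 2 := by ring
    linarith
  have hTub : ‖y - Wc y‖ ≤ (1 + δ) * ‖y‖ := by
    calc ‖y - Wc y‖ ≤ ‖y‖ + ‖Wc y‖ := norm_sub_le _ _
      _ ≤ (1 + δ) * ‖y‖ := by linarith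
  have hT0 : 0 < ‖y - Wc y‖ := by
    rcases eq_or_ne (y - Wc y) 0 with h | h
    · rw [h, inner_zero_right] at hinner; nlinarith
    · exact norm_pos_iff.mpr h
  have hcos : (1 - δ) / (1 + δ) ≤ (inner ℝ y (y - Wc y) : ℝ) / (‖y‖ * ‖y - Wc y‖) := by
    rw [div_le_div_iff₀ (by linarith) (by positivity)]
    nlinarith [mul_le_mul_of_nonneg_left hTub (mul_nonneg (by linarith : (0:ℝ) ≤ 1 - δ) hyn.le), mul_le_mul_of_nonneg_right hinner (by linarith : (0:ℝ) ≤ 1 + δ)]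
  refine ⟨hcos, h2, ?_⟩
  have hcle : (inner ℝ y (y - Wc y) : ℝ) / (‖y‖ * ‖y - Wc y‖) ≤ 1 :=
    le_trans (le_abs_self _) (abs_real_inner_div_norm_mul_norm_le_one y _)
  have harctan : Real.arctan μ = Real.arccos (1 / s) := by
    rw [hs_def, add_comm (μ ^ 2) 1, ← Real.cos_arctan,
      Real.arccos_cos (by rw [← Real.arctan_zero]; exact (Real.arctan_strictMono hμ).le)
        (le_trans (Real.arctan_lt_pi_div_two μ).le (by linarith [Real.pi_pos]))]
  rw [InnerProductGeometry.angle, harctan]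
  have h1s : (0:ℝ) < 1 / s := by positivity
  exact Real.strictAntiOn_arccos
    (Set.mem_Icc.mpr ⟨by linarith, by linarith⟩)
    (Set.mem_Icc.mpr ⟨by nlinarith, hcle⟩)
    (lt_of_lt_of_le h2 hcos)
end
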